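/- For all positive integers m and n, ∑_{i=0}^m 2^i * C(m,i) * δ[n-1 ≤ min(2q+i, 2m-i)] = ∑_{ℓ=0}^m ∑_{t=b(ℓ)}^m C(m,ℓ) * C(ℓ, ℓ+t-m) + ε, where q = ⌊(n-1)/2⌋, b(ℓ) = max(n-1-ℓ, m-ℓ), δ[P] is 1 if P holds and 0 otherwise, and ε = -1 if n ≤ 2m and n is even, and ε = 0 otherwise. -/

import Mathlib

open Finset

lemma colsum (m j : ℕ) (hj : j ≤ m) :
    ∑ ℓ ∈ Finset.Icc j m, m.choose ℓ * ℓ.choose j = 2 ^ (m - j) * m.choose j := by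
  have b1 : ∑ ℓ ∈ Finset.Icc j m, m.choose ℓ * ℓ.choose j
      = ∑ k ∈ Finset.range (m - j + 1), m.choose j * (m - j).choose k := by
    apply Finset.sum_nbij' (fun ℓ => ℓ - j) (fun k => j + k)
    · intro ℓ h; simp only [Finset.mem_Icc, Finset.mem_range] at *; omega
    · intro k h; simp only [Finset.mem_Icc, Finset.mem_range] at *; omega
    · intro ℓ h; simp only [Finset.mem_Icc] at h; omega
    · intro k h; omega
    · intro ℓ h
      simp only [Finset.mem_Icc] at h
      exact Nat.choose_mul h.1
  rw [b1, ← Finset.mul_sum, Nat.sum_range_choose]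
  ring

lemma colsum' (m j : ℕ) (hj : j ≤ m) :
    ∑ ℓ ∈ Finset.range (m + 1), m.choose ℓ * ℓ.choose j = 2 ^ (m - j) * m.choose j := by
  rw [← colsum m j hj]
  symm
  apply Finset.sum_subset
  · intro x hx; simp only [Finset.mem_Icc, Finset.mem_range] at *; omega
  · intro x hx hx'
    simp only [Finset.mem_Icc, Finset.mem_range] at hx hx'
    have : x < j := by omega
    simp [Nat.choose_eq_zero_of_lt this]

lemma rhs_eq (m n : ℕ) :
    ∑ ℓ ∈ Finset.range (m + 1), ∑ t ∈ Finset.Icc (max (n - 1 - ℓ) (m - ℓ)) m,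
        m.choose ℓ * ℓ.choose (ℓ + t - m)
      = ∑ j ∈ Finset.Icc (n - 1 - m) m, 2 ^ (m - j) * m.choose j := by
  have step1 : ∀ ℓ ∈ Finset.range (m + 1),
      ∑ t ∈ Finset.Icc (max (n - 1 - ℓ) (m - ℓ)) m, m.choose ℓ * ℓ.choose (ℓ + t - m)
        = ∑ j ∈ Finset.Icc (n - 1 - m) m, m.choose ℓ * ℓ.choose j := by
    intro ℓ hℓ
    simp only [Finset.mem_range] at hℓ
    have hℓm : ℓ ≤ m := by omega
    have b1 : ∑ t ∈ Finset.Icc (max (n - 1 - ℓ) (m - ℓ)) m, m.choose ℓ * ℓ.choose (ℓ + t - m)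
        = ∑ j ∈ Finset.Icc (n - 1 - m) ℓ, m.choose ℓ * ℓ.choose j := by
      apply Finset.sum_nbij' (fun t => ℓ + t - m) (fun j => m - ℓ + j)
      · intro t ht; simp only [Finset.mem_Icc, max_le_iff] at *; omega
      · intro j hjm; simp only [Finset.mem_Icc, max_le_iff, le_max_iff] at *; omega
      · intro t ht; simp only [Finset.mem_Icc, max_le_iff] at ht; omega
      · intro j hjm; simp only [Finset.mem_Icc] at hjm; omega
      · intro t ht; rfl
    rw [b1]
    apply Finset.sum_subset
    · intro x hx; simp only [Finset.mem_Icc] at *; omega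
    · intro x hx hx'
      simp only [Finset.mem_Icc] at hx hx'
      have : ℓ < x := by omega
      simp [Nat.choose_eq_zero_of_lt this]
  rw [Finset.sum_congr rfl step1, Finset.sum_comm]
  apply Finset.sum_congr rfl
  intro j hj
  simp only [Finset.mem_Icc] at hj
  exact colsum' m j hj.2

theorem stmt6 (m n : ℕ) (hm : 1 ≤ m) (hn : 1 ≤ n) :
    (∑ i ∈ Finset.range (m + 1),
        (2 ^ i * m.choose i : ℤ) *
          (if n - 1 ≤ min (2 * ((n - 1) / 2) + i) (2 * m - i) then 1 else 0))
      = (∑ ℓ ∈ Finset.range (m + 1), ∑ t ∈ Finset.Icc (max (n - 1 - ℓ) (m - ℓ)) m,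
          (m.choose ℓ * ℓ.choose (ℓ + t - m) : ℤ))
        + (if n ≤ 2 * m ∧ Even n then -1 else 0) := by
  have hR : (∑ ℓ ∈ Finset.range (m + 1), ∑ t ∈ Finset.Icc (max (n - 1 - ℓ) (m - ℓ)) m,
          (m.choose ℓ * ℓ.choose (ℓ + t - m) : ℤ))
      = ((∑ j ∈ Finset.Icc (n - 1 - m) m, 2 ^ (m - j) * m.choose j : ℕ) : ℤ) := by
    rw [← rhs_eq m n]
    push_cast
    rfl
  rw [hR]
  rw [← Finset.sum_range_reflect
    (fun i => (2 ^ i * m.choose i : ℤ) *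
      (if n - 1 ≤ min (2 * ((n - 1) / 2) + i) (2 * m - i) then 1 else 0)) (m + 1)]
  simp only [Nat.add_sub_cancel]
  have key : ∀ j ∈ Finset.range (m + 1),
      (2 ^ (m - j) * m.choose (m - j) : ℤ) *
          (if n - 1 ≤ min (2 * ((n - 1) / 2) + (m - j)) (2 * m - (m - j)) then 1 else 0)
        = (if n - 1 - m ≤ j then (2 : ℤ) ^ (m - j) * m.choose j else 0)
          - (if j = m ∧ (n ≤ 2 * m ∧ Even n) then 1 else 0) := by
    intro j hj
    simp only [Finset.mem_range] at hj
    have hj' : j ≤ m := by omega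
    rw [Nat.choose_symm hj']
    simp only [le_min_iff, Nat.even_iff]
    split_ifs <;> first
      | (exfalso; omega)
      | ring1
      | (simp_all [Nat.choose_self]; try omega)
  rw [Finset.sum_congr rfl key, Finset.sum_sub_distrib]
  have h1 : ∑ j ∈ Finset.range (m + 1),
      (if n - 1 - m ≤ j then (2 : ℤ) ^ (m - j) * m.choose j else 0)
      = ((∑ j ∈ Finset.Icc (n - 1 - m) m, 2 ^ (m - j) * m.choose j : ℕ) : ℤ) := by
    rw [← Finset.sum_filter]
    have : Finset.filter (fun j => n - 1 - m ≤ j) (Finset.range (m + 1))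
        = Finset.Icc (n - 1 - m) m := by
      ext x; simp only [Finset.mem_filter, Finset.mem_range, Finset.mem_Icc]; omega
    rw [this]
    push_cast
    rfl
  have h2 : ∑ j ∈ Finset.range (m + 1),
      (if j = m ∧ (n ≤ 2 * m ∧ Even n) then (1 : ℤ) else 0)
      = (if n ≤ 2 * m ∧ Even n then (1 : ℤ) else 0) := by
    by_cases hP : n ≤ 2 * m ∧ Even n
    · simp only [hP, and_true, if_true]
      rw [Finset.sum_ite_eq' (Finset.range (m + 1)) m (fun _ => (1 : ℤ))]
      simp
    · simp [hP]
  rw [h1, h2]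
  by_cases hP : n ≤ 2 * m ∧ Even n <;> simp [hP] <;> ring
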